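/- Let A ∈ ℝ^{d×d} be symmetric positive definite with smallest eigenvalue ℓ > 0 and largest eigenvalue L, and condition number κ = L/ℓ > 1. Let g : ℝ^d → ℝ be convex and differentiable with β-Lipschitz gradient, let f(x) = ½xᵀAx + g(x), and let x* be the unique minimizer of f (so Ax* + ∇g(x*) = 0). Fix η > 0, let s and h be the ESGD parameters, set C(η) = ω₁·α_s(η)/(ω₀−1), and let γ > 0 satisfy 0 < β < γ·ℓ·C(η). Then the PESGD iterates, given by x_{n+1} = R_s(−hA)x_n − h·B_s(−hA)·∇g(x_n), satisfy ‖x_{n+1} − x*‖ ≤ (1+γ)·α_s(η)·‖x_n − x*‖ for every n. -/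

import Mathlib

open Polynomial Matrix

noncomputable section

/-- The degree-`n` Chebyshev polynomial of the first kind over `ℝ`,
characterized by `T_n (cos θ) = cos (n θ)`. -/
def chebT (n : ℕ) : Polynomial ℝ := Polynomial.Chebyshev.T ℝ (n : ℤ)

/-- `ω₀ = 1 + η / s²`. -/
def omega0 (s : ℕ) (η : ℝ) : ℝ := 1 + η / (s : ℝ) ^ 2

/-- `ω₁ = T_s(ω₀) / T_s'(ω₀)`. -/
def omega1 (s : ℕ) (η : ℝ) : ℝ :=
  (chebT s).eval (omega0 s η) / (Polynomial.derivative (chebT s)).eval (omega0 s η)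

/-- `α_s(η) = 1 / T_s(ω₀)`. -/
def alphaS (s : ℕ) (η : ℝ) : ℝ := ((chebT s).eval (omega0 s η))⁻¹

/-- The stability polynomial `R_s(z) = T_s(ω₀ + ω₁ z) / T_s(ω₀)`. -/
def RsPoly (s : ℕ) (η : ℝ) : Polynomial ℝ :=
  Polynomial.C (alphaS s η) *
    (chebT s).comp (Polynomial.C (omega0 s η) + Polynomial.C (omega1 s η) * Polynomial.X)

/-- The polynomial `B_s` with `ζ · B_s(ζ) = R_s(ζ) − 1`. -/
def BsPoly (s : ℕ) (η : ℝ) : Polynomial ℝ := (RsPoly s η - 1) /ₘ Polynomial.X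

/-- The ESGD stage number `s = ⌈√((κ−1)η/2)⌉`. -/
def stages (κ η : ℝ) : ℕ := ⌈Real.sqrt ((κ - 1) * η / 2)⌉₊

/-- The ESGD step size `h = (ω₀ − 1)/(ω₁ ℓ)`. -/
def stepSize (κ η ℓ : ℝ) : ℝ :=
  (omega0 (stages κ η) η - 1) / (omega1 (stages κ η) η * ℓ)

/-- The constant `C(η) = ω₁ α_s(η) / (ω₀ − 1)`. -/
def Ceta (s : ℕ) (η : ℝ) : ℝ := omega1 s η * alphaS s η / (omega0 s η - 1)

end

section AuxPESGD
open Polynomial Finset Matrix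

lemma abs_sin_nat_mul_le (n : ℕ) (θ : ℝ) : |Real.sin (n * θ)| ≤ n * |Real.sin θ| := by
  induction n with
  | zero => simp
  | succ n ih =>
    have : ((n:ℝ)+1) * θ = n * θ + θ := by ring
    push_cast
    rw [this, Real.sin_add]
    calc |Real.sin (n*θ) * Real.cos θ + Real.cos (n*θ) * Real.sin θ|
        ≤ |Real.sin (n*θ) * Real.cos θ| + |Real.cos (n*θ) * Real.sin θ| := abs_add_le _ _
      _ ≤ |Real.sin (n*θ)| * 1 + 1 * |Real.sin θ| := by
          rw [abs_mul, abs_mul]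
          gcongr <;> first | exact Real.abs_cos_le_one _
      _ ≤ (n:ℝ) * |Real.sin θ| + 1 * |Real.sin θ| := by
          rw [mul_one]; gcongr
      _ = ((n:ℝ)+1) * |Real.sin θ| := by ring

lemma one_sub_cos_eq (x : ℝ) : 1 - Real.cos x = 2 * Real.sin (x/2) ^ 2 := by
  have h := Real.cos_two_mul' (x/2)
  have h2 : Real.cos (x/2)^2 = 1 - Real.sin (x/2)^2 := by
    have := Real.sin_sq_add_cos_sq (x/2); linarith
  have : (2:ℝ) * (x/2) = x := by ring
  rw [this] at h
  rw [h, h2]; ring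

lemma cos_nat_mul_ge (n : ℕ) (θ : ℝ) : 1 - (n:ℝ)^2 * (1 - Real.cos θ) ≤ Real.cos (n * θ) := by
  have h1 : 1 - Real.cos (n*θ) = 2 * Real.sin (n*θ/2) ^ 2 := one_sub_cos_eq _
  have h2 : 1 - Real.cos θ = 2 * Real.sin (θ/2) ^ 2 := one_sub_cos_eq _
  have h3 : |Real.sin (n * (θ/2))| ≤ n * |Real.sin (θ/2)| := abs_sin_nat_mul_le n (θ/2)
  have h4 : Real.sin (n*θ/2) ^ 2 ≤ ((n:ℝ) * |Real.sin (θ/2)|) ^ 2 := by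
    have : (n:ℝ)*θ/2 = n * (θ/2) := by ring
    rw [this, ← sq_abs]
    exact pow_le_pow_left₀ (abs_nonneg _) h3 2
  have h5 : ((n:ℝ) * |Real.sin (θ/2)|) ^ 2 = (n:ℝ)^2 * Real.sin (θ/2)^2 := by
    rw [mul_pow, sq_abs]
  nlinarith [h4]



lemma chebT_add_two (n : ℕ) : chebT (n+2) = 2 * X * chebT (n+1) - chebT n := by
  unfold chebT
  have : ((n+2 : ℕ) : ℤ) = (n : ℤ) + 2 := by push_cast; ring
  rw [this, Polynomial.Chebyshev.T_add_two]
  norm_num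

noncomputable def Qc (n : ℕ) : Polynomial ℝ := (chebT n).comp (X + 1)

lemma Qc_zero : Qc 0 = 1 := by simp [Qc, chebT, Polynomial.Chebyshev.T_zero]
lemma Qc_one : Qc 1 = X + 1 := by simp [Qc, chebT, Polynomial.Chebyshev.T_one]
lemma Qc_add_two (n : ℕ) : Qc (n+2) = 2 * (X+1) * Qc (n+1) - Qc n := by
  rw [Qc, Qc, Qc, chebT_add_two, Polynomial.sub_comp, Polynomial.mul_comp,
    Polynomial.mul_comp, Polynomial.X_comp]
  norm_num

lemma Qc_key (n : ℕ) :
    ∀ k, 0 ≤ (Qc n).coeff k ∧ 0 ≤ (Qc (n+1) - Qc n).coeff k := by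
  induction n with
  | zero =>
    intro k
    rw [Qc_zero, Qc_one]
    have : (X + 1 - 1 : ℝ[X]) = X := by ring
    rw [this]
    constructor
    · rcases k with _ | k <;> simp [coeff_one]
    · rcases k with _ | _ | k <;> simp [coeff_X]
  | succ n ih =>
    have hD : Qc (n+2) - Qc (n+1) = X * (2 * Qc (n+1)) + (Qc (n+1) - Qc n) := by
      rw [Qc_add_two]; ring
    have hQ1 : ∀ k, 0 ≤ (Qc (n+1)).coeff k := by
      intro k
      have h1 := (ih k).1
      have h2 := (ih k).2
      have : (Qc (n+1)).coeff k = (Qc n).coeff k + (Qc (n+1) - Qc n).coeff k := by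
        simp [coeff_sub]
      linarith [this ▸ add_nonneg h1 h2]
    intro k
    refine ⟨hQ1 k, ?_⟩
    rw [hD, coeff_add]
    have h2 : 0 ≤ (X * (2 * Qc (n+1))).coeff k := by
      rcases k with _ | k
      · simp
      · rw [coeff_X_mul]
        have : (2 * Qc (n+1)).coeff k = 2 * (Qc (n+1)).coeff k := by
          rw [Polynomial.coeff_ofNat_mul]
        rw [this]
        linarith [hQ1 k]
    linarith [(ih k).2]

lemma Qc_coeff_nonneg (n k : ℕ) : 0 ≤ (Qc n).coeff k := (Qc_key n k).1

lemma Qc_coeff_zero (n : ℕ) : (Qc n).coeff 0 = 1 := by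
  have h : (Qc n).coeff 0 = (chebT n).eval 1 := by
    rw [Qc, Polynomial.coeff_zero_eq_eval_zero, Polynomial.eval_comp]
    simp
  rw [h]
  have := Polynomial.Chebyshev.T_real_cos 0 (n : ℤ)
  simpa [chebT] using this

lemma Qc_coeff_one (n : ℕ) : (Qc n).coeff 1 = (n : ℝ)^2 := by
  induction n using Nat.strong_induction_on with
  | _ n ih =>
    match n with
    | 0 => rw [Qc_zero]; norm_num [Polynomial.coeff_one]
    | 1 => rw [Qc_one]; norm_num [Polynomial.coeff_add, Polynomial.coeff_one, Polynomial.coeff_X_one]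
    | (m+2) =>
      have e := Qc_add_two m
      have : (2 * (X+1) * Qc (m+1) : ℝ[X]) = X * (2 * Qc (m+1)) + 2 * Qc (m+1) := by ring
      rw [e, this, coeff_sub, coeff_add, coeff_X_mul, Polynomial.coeff_ofNat_mul,
        Polynomial.coeff_ofNat_mul, Qc_coeff_zero, ih (m+1) (by omega), ih m (by omega)]
      push_cast; ring


lemma pow_tangent (k : ℕ) {u v : ℝ} (hu : 0 ≤ u) (hv : 0 ≤ v) :
    u^k + k * u^(k-1) * (v - u) ≤ v^k := by
  rcases k with _ | j
  · simp
  · have hgeo := geom_sum₂_mul v u (j+1)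
    have hexp : ∀ i:ℕ, j+1-1-i = j-i := fun i => by omega
    simp only [hexp] at hgeo
    have hS : ∀ S : ℝ, S = ∑ i ∈ range (j+1), v^i * u^(j-i) → 
        ((j:ℝ)+1) * u^j * (v-u) ≤ S * (v-u) := by
      intro S hSd
      rcases le_or_gt u v with hle | hlt
      · have hSge : ((j:ℝ)+1) * u^j ≤ S := by
          rw [hSd]
          calc ((j:ℝ)+1) * u^j = ∑ _i ∈ range (j+1), u^j := by
                rw [Finset.sum_const, Finset.card_range, nsmul_eq_mul]; push_cast; ring
            _ ≤ _ := by
              apply Finset.sum_le_sum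
              intro i hi
              simp only [Finset.mem_range] at hi
              have : u^j = u^i * u^(j-i) := by
                rw [← pow_add]; congr 1; omega
              rw [this]
              exact mul_le_mul_of_nonneg_right (pow_le_pow_left₀ hu hle i) (pow_nonneg hu _)
        nlinarith
      · have hSle : S ≤ ((j:ℝ)+1) * u^j := by
          rw [hSd]
          calc ∑ i ∈ range (j+1), v^i * u^(j-i) 
              ≤ ∑ _i ∈ range (j+1), u^j := by
                apply Finset.sum_le_sum
                intro i hi
                simp only [Finset.mem_range] at hi
                have h2 : u^j = u^i * u^(j-i) := by
                  rw [← pow_add]; congr 1; omega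
                rw [h2]
                exact mul_le_mul_of_nonneg_right (pow_le_pow_left₀ hv hlt.le i) (pow_nonneg hu _)
            _ = ((j:ℝ)+1) * u^j := by
                rw [Finset.sum_const, Finset.card_range, nsmul_eq_mul]; push_cast; ring
        nlinarith
    have := hS _ rfl
    push_cast at this ⊢
    have hj : (j:ℝ)+1 = ((j+1 : ℕ) : ℝ) := by push_cast; ring
    nlinarith [hgeo]

lemma eval_derivative_eq_sum_range {p : ℝ[X]} (u : ℝ) :
    (Polynomial.derivative p).eval u
      = ∑ k ∈ range (p.natDegree + 1), p.coeff k * k * u^(k-1) := by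
  conv_lhs => rw [p.as_sum_range' (p.natDegree+1) (by omega)]
  rw [map_sum, Polynomial.eval_finset_sum]
  apply Finset.sum_congr rfl
  intro k _
  rw [← Polynomial.C_mul_X_pow_eq_monomial, Polynomial.derivative_C_mul_X_pow]
  simp

lemma tangent_le_eval {p : ℝ[X]} (hp : ∀ k, 0 ≤ p.coeff k) {u v : ℝ}
    (hu : 0 ≤ u) (hv : 0 ≤ v) :
    p.eval u + (Polynomial.derivative p).eval u * (v - u) ≤ p.eval v := by
  rw [Polynomial.eval_eq_sum_range (p := p) u, Polynomial.eval_eq_sum_range (p := p) v,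
    eval_derivative_eq_sum_range, Finset.sum_mul, ← Finset.sum_add_distrib]
  apply Finset.sum_le_sum
  intro k _
  have := pow_tangent k hu hv
  have hc := hp k
  nlinarith

lemma coeff_zero_le_eval {p : ℝ[X]} (hp : ∀ k, 0 ≤ p.coeff k) {u : ℝ} (hu : 0 ≤ u) :
    p.coeff 0 ≤ p.eval u := by
  rw [Polynomial.eval_eq_sum_range (p := p) u]
  have h0 : p.coeff 0 = p.coeff 0 * u^0 := by simp
  rw [h0]
  apply Finset.single_le_sum (f := fun k => p.coeff k * u^k)
  · intro i _; exact mul_nonneg (hp i) (pow_nonneg hu i)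
  · simp

lemma coeff_derivative_nonneg {p : ℝ[X]} (hp : ∀ k, 0 ≤ p.coeff k) (k : ℕ) :
    0 ≤ (Polynomial.derivative p).coeff k := by
  rw [Polynomial.coeff_derivative]
  exact mul_nonneg (hp _) (by positivity)

lemma deriv_coeff_zero : ∀ (p : ℝ[X]), (Polynomial.derivative p).coeff 0 = p.coeff 1 := by
  intro p; rw [Polynomial.coeff_derivative]; simp



lemma chebT_eval_shift (n : ℕ) (u : ℝ) : (chebT n).eval (1+u) = (Qc n).eval u := by
  rw [Qc, Polynomial.eval_comp]; norm_num; rw [add_comm]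

lemma derivative_Qc (n : ℕ) :
    Polynomial.derivative (Qc n) = (Polynomial.derivative (chebT n)).comp (X+1) := by
  rw [Qc, Polynomial.derivative_comp]
  simp

lemma chebT_deriv_eval_shift (n : ℕ) (u : ℝ) :
    (Polynomial.derivative (chebT n)).eval (1+u) = (Polynomial.derivative (Qc n)).eval u := by
  rw [derivative_Qc, Polynomial.eval_comp]; norm_num; rw [add_comm]

lemma chebT_eval_one (n : ℕ) : (chebT n).eval 1 = 1 := by
  have h := chebT_eval_shift n 0
  norm_num at h
  rw [h, ← Polynomial.coeff_zero_eq_eval_zero, Qc_coeff_zero]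

lemma one_le_chebT_eval (n : ℕ) {x : ℝ} (hx : 1 ≤ x) : 1 ≤ (chebT n).eval x := by
  have h : x = 1 + (x-1) := by ring
  rw [h, chebT_eval_shift]
  have := coeff_zero_le_eval (Qc_coeff_nonneg n) (u := x-1) (by linarith)
  rw [Qc_coeff_zero] at this; exact this

lemma sq_le_chebT_deriv_eval (n : ℕ) {x : ℝ} (hx : 1 ≤ x) :
    (n:ℝ)^2 ≤ (Polynomial.derivative (chebT n)).eval x := by
  have h : x = 1 + (x-1) := by ring
  rw [h, chebT_deriv_eval_shift]
  have := coeff_zero_le_eval (p := Polynomial.derivative (Qc n))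
    (coeff_derivative_nonneg (Qc_coeff_nonneg n)) (u := x-1) (by linarith)
  rw [Polynomial.coeff_derivative] at this
  simpa [Qc_coeff_one] using this

lemma chebT_tangent_ge_one (n : ℕ) {x y : ℝ} (hx : 1 ≤ x) (hy : 1 ≤ y) :
    (chebT n).eval x + (Polynomial.derivative (chebT n)).eval x * (y - x)
      ≤ (chebT n).eval y := by
  have hx' : x = 1 + (x-1) := by ring
  have hy' : y = 1 + (y-1) := by ring
  rw [hx', hy', chebT_eval_shift, chebT_eval_shift, chebT_deriv_eval_shift]
  have := tangent_le_eval (Qc_coeff_nonneg n) (u := x-1) (v := y-1) (by linarith) (by linarith)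
  calc _ = (Qc n).eval (x-1) + (Polynomial.derivative (Qc n)).eval (x-1) * ((y-1) - (x-1)) := by
        ring
    _ ≤ _ := this

lemma abs_chebT_le_one (n : ℕ) {y : ℝ} (h1 : -1 ≤ y) (h2 : y ≤ 1) :
    |(chebT n).eval y| ≤ 1 := by
  have : y = Real.cos (Real.arccos y) := (Real.cos_arccos h1 h2).symm
  rw [this, chebT]
  rw [Polynomial.Chebyshev.T_real_cos]
  exact Real.abs_cos_le_one _

lemma chebT_lower_bound (n : ℕ) {y : ℝ} (h1 : -1 ≤ y) (h2 : y ≤ 1) :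
    1 - (n:ℝ)^2 * (1 - y) ≤ (chebT n).eval y := by
  have hy : y = Real.cos (Real.arccos y) := (Real.cos_arccos h1 h2).symm
  rw [hy, chebT, Polynomial.Chebyshev.T_real_cos]
  have := cos_nat_mul_ge n (Real.arccos y)
  rw [← hy] at this
  push_cast
  convert this using 3
  rw [← hy]

-- master tangent bound
lemma chebT_tangent_le (n : ℕ) {w y : ℝ} (hw : 1 ≤ w) (hy1 : -1 ≤ y) (hyw : y ≤ w) :
    (chebT n).eval w + (Polynomial.derivative (chebT n)).eval w * (y - w)
      ≤ (chebT n).eval y := by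
  rcases le_or_gt 1 y with hy | hy
  · exact chebT_tangent_ge_one n hw hy
  · have hV : (chebT n).eval w + (Polynomial.derivative (chebT n)).eval w * (1 - w)
        ≤ 1 := by
      have := chebT_tangent_ge_one n hw (le_refl 1)
      rw [chebT_eval_one] at this; exact this
    have hd : (n:ℝ)^2 ≤ (Polynomial.derivative (chebT n)).eval w := sq_le_chebT_deriv_eval n hw
    have hlow := chebT_lower_bound n hy1 hy.le
    nlinarith [hd, hV, hlow]


variable {d : ℕ}

lemma toCLM_eigen {A : Matrix (Fin d) (Fin d) ℝ} (hA : A.IsHermitian) (j : Fin d) :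
    Matrix.toEuclideanCLM (𝕜 := ℝ) A (hA.eigenvectorBasis j)
      = hA.eigenvalues j • hA.eigenvectorBasis j := by
  apply (WithLp.equiv 2 _).injective
  change A *ᵥ WithLp.ofLp (hA.eigenvectorBasis j) = _
  have := hA.mulVec_eigenvectorBasis j
  simpa using this

lemma toCLM_eigen' {A : Matrix (Fin d) (Fin d) ℝ} (hA : A.IsHermitian) (j : Fin d)
    {a : EuclideanSpace ℝ (Fin d) →L[ℝ] EuclideanSpace ℝ (Fin d)}
    (ha : a = Matrix.toEuclideanCLM (𝕜 := ℝ) A) :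
    a (hA.eigenvectorBasis j) = hA.eigenvalues j • hA.eigenvectorBasis j := by
  rw [ha]; exact toCLM_eigen hA j

lemma toCLM_aeval_eigen {A : Matrix (Fin d) (Fin d) ℝ} (hA : A.IsHermitian)
    (P : ℝ[X]) (j : Fin d) :
    Matrix.toEuclideanCLM (𝕜 := ℝ) (Polynomial.aeval A P) (hA.eigenvectorBasis j)
      = (P.eval (hA.eigenvalues j)) • hA.eigenvectorBasis j := by
  set a := Matrix.toEuclideanCLM (𝕜 := ℝ) A with ha
  have haev : Matrix.toEuclideanCLM (𝕜 := ℝ) (Polynomial.aeval A P)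
      = Polynomial.aeval a P := by
    rw [ha]
    exact (Polynomial.aeval_algHom_apply (Matrix.toEuclideanCLM (𝕜 := ℝ)) A P).symm
  have hpow : ∀ k : ℕ, (a ^ k) (hA.eigenvectorBasis j)
      = (hA.eigenvalues j ^ k) • hA.eigenvectorBasis j := by
    intro k
    induction k with
    | zero => simp
    | succ k ih =>
      rw [pow_succ, ContinuousLinearMap.mul_apply, toCLM_eigen' hA j ha,
        _root_.map_smul, ih, smul_smul, mul_comm, ← pow_succ]
  rw [haev, Polynomial.aeval_eq_sum_range, Polynomial.eval_eq_sum_range]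
  rw [ContinuousLinearMap.sum_apply]
  rw [Finset.sum_smul]
  apply Finset.sum_congr rfl
  intro k _
  rw [ContinuousLinearMap.smul_apply, hpow k, smul_smul]

lemma norm_toCLM_aeval_le {A : Matrix (Fin d) (Fin d) ℝ} (hA : A.IsHermitian)
    (P : ℝ[X]) {M : ℝ} (hM : 0 ≤ M)
    (hPM : ∀ μ ∈ spectrum ℝ A, |P.eval μ| ≤ M) (x : EuclideanSpace ℝ (Fin d)) :
    ‖Matrix.toEuclideanCLM (𝕜 := ℝ) (Polynomial.aeval A P) x‖ ≤ M * ‖x‖ := by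
  set b := hA.eigenvectorBasis with hb
  set T := Matrix.toEuclideanCLM (𝕜 := ℝ) (Polynomial.aeval A P) with hT
  have hTx : T x = ∑ j, (P.eval (hA.eigenvalues j) * b.repr x j) • b j := by
    conv_lhs => rw [← b.sum_repr x, map_sum]
    apply Finset.sum_congr rfl
    intro j _
    rw [_root_.map_smul, hT, toCLM_aeval_eigen hA P j, smul_smul, mul_comm]
  have hrepr : ∀ i, b.repr (T x) i = P.eval (hA.eigenvalues i) * b.repr x i := by
    intro i
    rw [OrthonormalBasis.repr_apply_apply, hTx, Orthonormal.inner_right_fintype b.orthonormal]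
  have hnorm : ‖T x‖ = Real.sqrt (∑ i, ‖b.repr (T x) i‖^2) := by
    rw [← b.repr.norm_map (T x), EuclideanSpace.norm_eq]
  have hnx : ‖x‖ = Real.sqrt (∑ i, ‖b.repr x i‖^2) := by
    rw [← b.repr.norm_map x, EuclideanSpace.norm_eq]
  rw [hnorm, hnx, ← Real.sqrt_sq hM, ← Real.sqrt_mul (by positivity)]
  apply Real.sqrt_le_sqrt
  rw [Finset.mul_sum]
  apply Finset.sum_le_sum
  intro i _
  rw [hrepr i]
  have habs := hPM _ (hA.eigenvalues_mem_spectrum_real i)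
  have : ‖P.eval (hA.eigenvalues i) * b.repr x i‖
      = |P.eval (hA.eigenvalues i)| * ‖b.repr x i‖ := by
    rw [norm_mul, Real.norm_eq_abs]
  rw [this, mul_pow]
  apply mul_le_mul_of_nonneg_right _ (by positivity)
  exact pow_le_pow_left₀ (abs_nonneg _) habs 2






section Params
variable {ℓ L η : ℝ}

lemma stages_pos (hℓ : 0 < ℓ) (hκ : 1 < L/ℓ) (hη : 0 < η) : 0 < stages (L/ℓ) η := by
  rw [stages, Nat.ceil_pos]
  exact Real.sqrt_pos.mpr (by nlinarith)

lemma sq_stages_ge (hℓ : 0 < ℓ) (hκ : 1 < L/ℓ) (hη : 0 < η) :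
    (L/ℓ - 1) * η ≤ 2 * ((stages (L/ℓ) η : ℝ))^2 := by
  have h1 : Real.sqrt ((L/ℓ - 1) * η / 2) ≤ (stages (L/ℓ) η : ℝ) := Nat.le_ceil _
  have h2 : (L/ℓ - 1) * η / 2 = (Real.sqrt ((L/ℓ - 1) * η / 2))^2 :=
    (Real.sq_sqrt (by nlinarith)).symm
  nlinarith [Real.sqrt_nonneg ((L/ℓ - 1) * η / 2)]

variable (hℓ : 0 < ℓ) (hκ : 1 < L/ℓ) (hη : 0 < η)

lemma omega0_gt_one (hℓ : 0 < ℓ) (hκ : 1 < L/ℓ) (hη : 0 < η) :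
    1 < omega0 (stages (L/ℓ) η) η := by
  have := stages_pos hℓ hκ hη
  rw [omega0]
  have : (0:ℝ) < (stages (L/ℓ) η : ℝ)^2 := by positivity
  have : 0 < η / (stages (L/ℓ) η : ℝ)^2 := by positivity
  linarith

end Params

section Evals
variable {s : ℕ} {η : ℝ}

lemma one_le_T0 (hω : 1 < omega0 s η) : 1 ≤ (chebT s).eval (omega0 s η) :=
  one_le_chebT_eval s hω.le

lemma T0_pos (hω : 1 < omega0 s η) : 0 < (chebT s).eval (omega0 s η) :=
  lt_of_lt_of_le one_pos (one_le_T0 hω)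

lemma Tp_pos (hs : 0 < s) (hω : 1 < omega0 s η) :
    0 < (Polynomial.derivative (chebT s)).eval (omega0 s η) := by
  have := sq_le_chebT_deriv_eval s hω.le
  have hs' : (1:ℝ) ≤ (s:ℝ) := by exact_mod_cast hs
  nlinarith

lemma omega1_pos (hs : 0 < s) (hω : 1 < omega0 s η) : 0 < omega1 s η :=
  div_pos (T0_pos hω) (Tp_pos hs hω)

lemma alpha_pos (hω : 1 < omega0 s η) : 0 < alphaS s η :=
  inv_pos.mpr (T0_pos hω)

lemma alpha_le_one (hω : 1 < omega0 s η) : alphaS s η ≤ 1 := by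
  rw [alphaS]
  exact inv_le_one_of_one_le₀ (one_le_T0 hω)

lemma RsPoly_eval (z : ℝ) :
    (RsPoly s η).eval z = alphaS s η * (chebT s).eval (omega0 s η + omega1 s η * z) := by
  rw [RsPoly, Polynomial.eval_mul, Polynomial.eval_C, Polynomial.eval_comp]
  simp

lemma RsPoly_eval_zero (hω : 1 < omega0 s η) : (RsPoly s η).eval 0 = 1 := by
  rw [RsPoly_eval, mul_zero, add_zero, alphaS, inv_mul_cancel₀ (T0_pos hω).ne']

lemma Rs_sub_one (hω : 1 < omega0 s η) : RsPoly s η - 1 = Polynomial.X * BsPoly s η := by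
  have hmod := Polynomial.modByMonic_add_div (RsPoly s η - 1) Polynomial.X
  rw [Polynomial.modByMonic_X] at hmod
  have h0 : (RsPoly s η - 1).eval 0 = 0 := by
    rw [Polynomial.eval_sub, RsPoly_eval_zero hω, Polynomial.eval_one, sub_self]
  rw [h0, map_zero, zero_add] at hmod
  rw [← hmod, BsPoly]

-- key bound on the scaled spectral variable
lemma abs_Rs_le (hs : 0 < s) (hω : 1 < omega0 s η) {y : ℝ}
    (h1 : -1 ≤ omega0 s η + omega1 s η * y) (h2 : omega0 s η + omega1 s η * y ≤ 1) :
    |(RsPoly s η).eval y| ≤ alphaS s η := by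
  rw [RsPoly_eval, abs_mul, abs_of_pos (alpha_pos hω)]
  have := abs_chebT_le_one s h1 h2
  nlinarith [alpha_pos (s := s) (η := η) hω, abs_nonneg ((chebT s).eval (omega0 s η + omega1 s η * y))]

lemma Rs_ge_one_add (hs : 0 < s) (hω : 1 < omega0 s η) {y : ℝ} (hy : y ≤ 0)
    (h1 : -1 ≤ omega0 s η + omega1 s η * y) :
    1 + y ≤ (RsPoly s η).eval y := by
  set w := omega0 s η with hw
  set T := (chebT s).eval w with hT
  set Tp := (Polynomial.derivative (chebT s)).eval w with hTp
  have hTpos := T0_pos hω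
  have hTppos := Tp_pos hs hω
  have harg : omega0 s η + omega1 s η * y ≤ w := by
    have h1' := omega1_pos hs hω
    nlinarith
  have htan := chebT_tangent_le s hω.le h1 harg
  rw [RsPoly_eval]
  have hsimp : w + ((omega0 s η + omega1 s η * y) - w) = omega0 s η + omega1 s η * y := by ring
  -- α * T(arg) ≥ α * (T + Tp * (arg - w)) = 1 + α * Tp * ω₁ * y = 1 + y
  have hα : alphaS s η = T⁻¹ := rfl
  have hω1 : omega1 s η = T / Tp := rfl
  have key : alphaS s η * (T + Tp * ((omega0 s η + omega1 s η * y) - w)) = 1 + y := by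
    have hT0 : T ≠ 0 := hTpos.ne'
    have hTp0 : Tp ≠ 0 := hTppos.ne'
    rw [hα, hω1, ← hw]
    field_simp
    ring
  calc 1 + y = alphaS s η * (T + Tp * ((omega0 s η + omega1 s η * y) - w)) := key.symm
    _ ≤ alphaS s η * (chebT s).eval (omega0 s η + omega1 s η * y) := by
        apply mul_le_mul_of_nonneg_left _ (alpha_pos hω).le
        calc T + Tp * ((omega0 s η + omega1 s η * y) - w)
            = (chebT s).eval w + (Polynomial.derivative (chebT s)).eval w *
                ((omega0 s η + omega1 s η * y) - w) := by rw [← hT, ← hTp]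
          _ ≤ _ := htan

lemma abs_Bs_le (hs : 0 < s) (hω : 1 < omega0 s η) {y : ℝ} (hy : y < 0)
    (h1 : -1 ≤ omega0 s η + omega1 s η * y) (h2 : omega0 s η + omega1 s η * y ≤ 1) :
    |(BsPoly s η).eval y| ≤ 1 := by
  have hfac : (RsPoly s η).eval y - 1 = y * (BsPoly s η).eval y := by
    have := congrArg (Polynomial.eval y) (Rs_sub_one (s := s) (η := η) hω)
    simpa using this
  have hub : (RsPoly s η).eval y ≤ 1 := by
    have := abs_Rs_le hs hω h1 h2
    have hα1 := alpha_le_one (s := s) (η := η) hω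
    have := abs_le.mp this
    linarith [this.2]
  have hlb : 1 + y ≤ (RsPoly s η).eval y := Rs_ge_one_add hs hω hy.le h1
  rw [abs_le]
  constructor
  · -- -1 ≤ B(y) : from R(y) ≤ 1 : y*B = R-1 ≤ 0 ≤ -y  → B ≥ ... careful signs
    nlinarith [hfac, hub]
  · nlinarith [hfac, hlb]

end Evals
end AuxPESGD

set_option maxHeartbeats 2000000 in
/-- **Theorem (PESGD convergence).** Let `A` be symmetric positive definite with smallest
eigenvalue `ℓ > 0`, largest eigenvalue `L`, condition number `κ = L/ℓ > 1`; let `g` be convex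
differentiable with `β`-Lipschitz gradient, `f(x) = ½xᵀAx + g(x)` with unique minimizer `x*`
(so `Ax* + ∇g(x*) = 0`). Fix `η > 0`, choose the ESGD parameters `s`, `h`, set
`C(η) = ω₁ α_s(η)/(ω₀ − 1)`, and let `γ > 0` satisfy `0 < β < γ ℓ C(η)`. Then the PESGD
iterates `x_{n+1} = R_s(−hA) xₙ − h B_s(−hA) ∇g(xₙ)` satisfy
`‖x_{n+1} − x*‖ ≤ (1+γ) α_s(η) ‖xₙ − x*‖`. -/
theorem pesgd_convergence {d : ℕ}
    (A : Matrix (Fin d) (Fin d) ℝ) (hA : A.PosDef)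
    (ℓ L : ℝ) (hℓ : 0 < ℓ) (hℓL : ℓ ≤ L)
    (hℓspec : ℓ ∈ spectrum ℝ A) (hLspec : L ∈ spectrum ℝ A)
    (hspec : spectrum ℝ A ⊆ Set.Icc ℓ L)
    (hκ : 1 < L / ℓ)
    (g : EuclideanSpace ℝ (Fin d) → ℝ) (hg : Differentiable ℝ g)
    (hgconv : ConvexOn ℝ Set.univ g)
    (β : ℝ) (hβ : 0 < β)
    (hLip : ∀ x y, ‖gradient g x - gradient g y‖ ≤ β * ‖x - y‖)
    (η : ℝ) (hη : 0 < η) (γ : ℝ) (hγ : 0 < γ)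
    (hβbound : β < γ * ℓ * Ceta (stages (L / ℓ) η) η)
    (f : EuclideanSpace ℝ (Fin d) → ℝ)
    (hf : ∀ x, f x = (1 / 2) * (inner ℝ x (Matrix.toEuclideanCLM (𝕜 := ℝ) A x) : ℝ) + g x)
    (xstar : EuclideanSpace ℝ (Fin d))
    (hmin : ∀ z, f xstar ≤ f z)
    (hstat : Matrix.toEuclideanCLM (𝕜 := ℝ) A xstar + gradient g xstar = 0)
    (x : ℕ → EuclideanSpace ℝ (Fin d))
    (hiter : ∀ n, x (n + 1) =
      Matrix.toEuclideanCLM (𝕜 := ℝ)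
          (Polynomial.aeval ((-(stepSize (L / ℓ) η ℓ)) • A) (RsPoly (stages (L / ℓ) η) η)) (x n)
        - stepSize (L / ℓ) η ℓ •
          Matrix.toEuclideanCLM (𝕜 := ℝ)
            (Polynomial.aeval ((-(stepSize (L / ℓ) η ℓ)) • A) (BsPoly (stages (L / ℓ) η) η))
            (gradient g (x n))) :
    ∀ n, ‖x (n + 1) - xstar‖ ≤
      (1 + γ) * alphaS (stages (L / ℓ) η) η * ‖x n - xstar‖ := by
  intro n
  set κ := L / ℓ with hκdef
  set s := stages κ η with hsdef
  set h := stepSize κ η ℓ with hhdef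
  have hs : 0 < s := stages_pos hℓ hκ hη
  have hω : 1 < omega0 s η := omega0_gt_one hℓ hκ hη
  have hω1 : 0 < omega1 s η := omega1_pos hs hω
  have hαpos : 0 < alphaS s η := alpha_pos hω
  have hh : 0 < h := by
    rw [hhdef, stepSize, ← hsdef]
    apply div_pos (by linarith) (by positivity)
  have hsq : (κ - 1) * η ≤ 2 * ((s : ℝ))^2 := sq_stages_ge hℓ hκ hη
  have hs2 : (0:ℝ) < ((s:ℝ))^2 := by positivity
  have he : omega0 s η - 1 = η / ((s:ℝ))^2 := by rw [omega0]; ring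
  have he2 : η = (omega0 s η - 1) * ((s:ℝ))^2 := by rw [he]; field_simp
  have hκℓ : L = κ * ℓ := by rw [hκdef]; field_simp
  have hkey : (κ - 1) * (omega0 s η - 1) ≤ 2 := by nlinarith
  have hω1h : omega1 s η * h = (omega0 s η - 1)/ℓ := by
    rw [hhdef, stepSize, ← hsdef]
    field_simp
  -- interval facts for the scaled spectral variable
  have hyfact : ∀ lam : ℝ, ℓ ≤ lam → lam ≤ L →
      (-1 ≤ omega0 s η + omega1 s η * (-h * lam) ∧
        omega0 s η + omega1 s η * (-h * lam) ≤ 1) := by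
    intro lam hl1 hl2
    have hrw : omega1 s η * (-h * lam) = -((omega0 s η - 1) * lam / ℓ) := by
      have : omega1 s η * (-h * lam) = -((omega1 s η * h) * lam) := by ring
      rw [this, hω1h]; ring
    constructor
    · rw [hrw]
      have hb : (omega0 s η - 1) * lam / ℓ ≤ (omega0 s η - 1) * κ := by
        rw [div_le_iff₀ hℓ]
        nlinarith
      nlinarith
    · rw [hrw]
      have hb : (omega0 s η - 1) ≤ (omega0 s η - 1) * lam / ℓ := by
        rw [le_div_iff₀ hℓ]
        nlinarith
      linarith
  -- step size times Lipschitz constant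
  have hβh : h * β < γ * alphaS s η := by
    have h1 : h * β < h * (γ * ℓ * Ceta s η) := by
      exact mul_lt_mul_of_pos_left hβbound hh
    have h2 : h * (γ * ℓ * Ceta s η) = γ * alphaS s η := by
      rw [hhdef, stepSize, ← hsdef, Ceta]
      have hωne : omega0 s η - 1 ≠ 0 := by linarith
      have hω1ne : omega1 s η ≠ 0 := hω1.ne'
      field_simp
    linarith
  -- matrix facts
  have hHerm : A.IsHermitian := hA.isHermitian
  have hscalemat : Polynomial.aeval A (Polynomial.C (-h) * Polynomial.X) = (-h) • A := by
    rw [_root_.map_mul, Polynomial.aeval_C, Polynomial.aeval_X, ← Algebra.smul_def]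
  have hcomp : ∀ P : ℝ[X], Polynomial.aeval ((-h) • A) P
      = Polynomial.aeval A (P.comp (Polynomial.C (-h) * Polynomial.X)) := by
    intro P
    rw [Polynomial.aeval_comp, hscalemat]
  have hevalcomp : ∀ (P : ℝ[X]) (lam : ℝ),
      (P.comp (Polynomial.C (-h) * Polynomial.X)).eval lam = P.eval (-h * lam) := by
    intro P lam
    rw [Polynomial.eval_comp]
    simp
  -- norm bounds
  have hRnorm : ∀ v, ‖Matrix.toEuclideanCLM (𝕜 := ℝ)
      (Polynomial.aeval ((-h) • A) (RsPoly s η)) v‖ ≤ alphaS s η * ‖v‖ := by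
    intro v
    rw [hcomp]
    apply norm_toCLM_aeval_le hHerm _ hαpos.le _ v
    intro μ hμ
    obtain ⟨hμ1, hμ2⟩ := hspec hμ
    rw [hevalcomp]
    exact abs_Rs_le hs hω (hyfact μ hμ1 hμ2).1 (hyfact μ hμ1 hμ2).2
  have hBnorm : ∀ v, ‖Matrix.toEuclideanCLM (𝕜 := ℝ)
      (Polynomial.aeval ((-h) • A) (BsPoly s η)) v‖ ≤ 1 * ‖v‖ := by
    intro v
    rw [hcomp]
    apply norm_toCLM_aeval_le hHerm _ one_pos.le _ v
    intro μ hμ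
    obtain ⟨hμ1, hμ2⟩ := hspec hμ
    rw [hevalcomp]
    have hneg : -h * μ < 0 := by nlinarith
    exact abs_Bs_le hs hω hneg (hyfact μ hμ1 hμ2).1 (hyfact μ hμ1 hμ2).2
  -- fixed point identity
  set Ra := Matrix.toEuclideanCLM (𝕜 := ℝ)
    (Polynomial.aeval ((-h) • A) (RsPoly s η)) with hRa
  set Ba := Matrix.toEuclideanCLM (𝕜 := ℝ)
    (Polynomial.aeval ((-h) • A) (BsPoly s η)) with hBa
  have hXB : RsPoly s η - 1 = BsPoly s η * Polynomial.X := by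
    rw [Rs_sub_one hω]; ring
  have hmat : Polynomial.aeval ((-h) • A) (RsPoly s η)
      = 1 + Polynomial.aeval ((-h) • A) (BsPoly s η) * ((-h) • A) := by
    have hc := congrArg (Polynomial.aeval ((-h) • A)) hXB
    rw [_root_.map_sub, _root_.map_one, _root_.map_mul, Polynomial.aeval_X,
      sub_eq_iff_eq_add] at hc
    rw [hc]; abel
  have hstat' : Matrix.toEuclideanCLM (𝕜 := ℝ) A xstar = -(gradient g xstar) :=
    eq_neg_of_add_eq_zero_left hstat
  have hMx : Matrix.toEuclideanCLM (𝕜 := ℝ) ((-h) • A) xstar = h • gradient g xstar := by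
    rw [_root_.map_smul, ContinuousLinearMap.smul_apply, hstat', smul_neg, neg_smul, neg_neg]
  have hfix : Ra xstar - h • Ba (gradient g xstar) = xstar := by
    rw [hRa, hmat, _root_.map_add, _root_.map_one, _root_.map_mul]
    rw [ContinuousLinearMap.add_apply, ContinuousLinearMap.one_apply,
      ContinuousLinearMap.mul_apply, hMx, _root_.map_smul, ← hBa]
    abel
  have hdiff : x (n+1) - xstar
      = Ra (x n - xstar) - h • Ba (gradient g (x n) - gradient g xstar) := by
    calc x (n+1) - xstar
        = (Ra (x n) - h • Ba (gradient g (x n)))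
            - (Ra xstar - h • Ba (gradient g xstar)) := by rw [hiter n, hfix]
      _ = Ra (x n - xstar) - h • Ba (gradient g (x n) - gradient g xstar) := by
          rw [_root_.map_sub, _root_.map_sub, smul_sub]; abel
  rw [hdiff]
  have hΔ : (0:ℝ) ≤ ‖x n - xstar‖ := norm_nonneg _
  calc ‖Ra (x n - xstar) - h • Ba (gradient g (x n) - gradient g xstar)‖
      ≤ ‖Ra (x n - xstar)‖ + ‖h • Ba (gradient g (x n) - gradient g xstar)‖ :=
        norm_sub_le _ _
    _ ≤ alphaS s η * ‖x n - xstar‖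
        + h * ‖Ba (gradient g (x n) - gradient g xstar)‖ := by
        have h1 := hRnorm (x n - xstar)
        have h2 : ‖h • Ba (gradient g (x n) - gradient g xstar)‖
            = h * ‖Ba (gradient g (x n) - gradient g xstar)‖ := by
          rw [norm_smul, Real.norm_eq_abs, abs_of_pos hh]
        rw [h2]
        linarith [h1]
    _ ≤ alphaS s η * ‖x n - xstar‖ + h * (β * ‖x n - xstar‖) := by
        have h3 := hBnorm (gradient g (x n) - gradient g xstar)
        have h4 := hLip (x n) xstar
        gcongr
        calc ‖Ba (gradient g (x n) - gradient g xstar)‖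
            ≤ 1 * ‖gradient g (x n) - gradient g xstar‖ := h3
          _ = ‖gradient g (x n) - gradient g xstar‖ := one_mul _
          _ ≤ β * ‖x n - xstar‖ := h4
    _ ≤ (1 + γ) * alphaS s η * ‖x n - xstar‖ := by nlinarith [hβh, hΔ]
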